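/- For a, b₁, c ∈ ℂ with c and c−b₂ not nonpositive integers, Re(c−a−b₂) > 0, and real x with |x| < 1: F₁(a; b₁, b₂; c; x, 1) = (Γ(c)Γ(c−a−b₂))/(Γ(c−a)Γ(c−b₂)) · ₂F₁(a, b₁; c−b₂; x), assuming the double series defining the left side converges. -/

import Mathlib

set_option maxHeartbeats 1000000


/-- The Pochhammer symbol `(a)_n = a(a+1)⋯(a+n-1)`. -/
noncomputable def poch (a : ℂ) (n : ℕ) : ℂ := Polynomial.eval a (ascPochhammer ℂ n)

/-- `z` is not a nonpositive integer. -/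
def NotNonposInt (z : ℂ) : Prop := ∀ m : ℕ, z ≠ -(m : ℂ)

/-- The summand of the Appell `F₁` double series. -/
noncomputable def F1term (a b₁ b₂ c : ℂ) (x y : ℂ) (p : ℕ × ℕ) : ℂ :=
  poch a (p.1 + p.2) / poch c (p.1 + p.2) *
    (poch b₁ p.1 * poch b₂ p.2) / ((Nat.factorial p.1) * (Nat.factorial p.2)) *
    x ^ p.1 * y ^ p.2

/-- Appell's first function `F₁(a; b₁, b₂; c; x, y)`. -/
noncomputable def F1 (a b₁ b₂ c : ℂ) (x y : ℂ) : ℂ := ∑' p : ℕ × ℕ, F1term a b₁ b₂ c x y p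

/-- The Gauss hypergeometric series `₂F₁(a,b;c;x)`. -/
noncomputable def twoF1 (a b c x : ℂ) : ℂ :=
  ∑' k : ℕ, poch a k * poch b k / (poch c k * (Nat.factorial k)) * x ^ k


open Filter Finset Complex Topology

lemma poch_zero (z : ℂ) : poch z 0 = 1 := by simp [poch]

lemma poch_succ (z : ℂ) (n : ℕ) : poch z (n + 1) = poch z n * (z + n) := by
  simp [poch, ascPochhammer_succ_eval]

lemma poch_prod (z : ℂ) (n : ℕ) : poch z n = ∏ i ∈ range n, (z + i) := by
  induction n with
  | zero => simp [poch_zero]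
  | succ n ih => rw [poch_succ, ih, prod_range_succ]

lemma poch_add (z : ℂ) (m n : ℕ) : poch z (m + n) = poch z m * poch (z + m) n := by
  rw [poch_prod, poch_prod, poch_prod, prod_range_add]
  congr 1
  refine prod_congr rfl fun i _ => ?_
  push_cast; ring

lemma NotNonposInt.add_nat {z : ℂ} (hz : NotNonposInt z) (j : ℕ) : NotNonposInt (z + j) := by
  intro m hm
  exact hz (m + j) (by push_cast; linear_combination hm)

lemma NotNonposInt.ne_zero {z : ℂ} (hz : NotNonposInt z) : z ≠ 0 := by
  simpa using hz 0

lemma NotNonposInt.of_re_pos {z : ℂ} (hz : 0 < z.re) : NotNonposInt z := by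
  intro m hm
  rw [hm] at hz
  simp at hz
  have : (0:ℝ) ≤ m := Nat.cast_nonneg m
  linarith

lemma poch_ne_zero {z : ℂ} (hz : NotNonposInt z) (n : ℕ) : poch z n ≠ 0 := by
  rw [poch_prod]
  exact prod_ne_zero_iff.2 fun i _ => fun h => (hz i) (by linear_combination h)

lemma norm_poch (z : ℂ) (n : ℕ) : ‖poch z n‖ = ∏ i ∈ range n, ‖z + i‖ := by
  rw [poch_prod]; exact norm_prod _ _

lemma Gamma_add_nat {z : ℂ} (hz : NotNonposInt z) (n : ℕ) :
    Complex.Gamma (z + n) = poch z n * Complex.Gamma z := by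
  induction n with
  | zero => simp [poch_zero]
  | succ n ih =>
    have hzn : z + n ≠ 0 := fun h => hz n (by linear_combination h)
    have : z + (n + 1 : ℕ) = (z + n) + 1 := by push_cast; ring
    rw [this, Complex.Gamma_add_one _ hzn, ih, poch_succ]; ring

lemma gammaSeq_eq (z : ℂ) (n : ℕ) :
    Complex.GammaSeq z n = (n : ℂ) ^ z * n.factorial / poch z (n + 1) := by
  rw [Complex.GammaSeq, poch_prod]

lemma gammaSeq_ne_zero {z : ℂ} (hz : NotNonposInt z) {n : ℕ} (hn : 1 ≤ n) :
    Complex.GammaSeq z n ≠ 0 := by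
  rw [gammaSeq_eq]
  have hn0 : (n : ℂ) ≠ 0 := Nat.cast_ne_zero.2 (Nat.one_le_iff_ne_zero.1 hn)
  apply div_ne_zero
  · apply mul_ne_zero
    · simp [Complex.cpow_eq_zero_iff, hn0]
    · exact_mod_cast Nat.factorial_ne_zero n
  · exact poch_ne_zero hz _

lemma poch_eq_gammaSeq {z : ℂ} (hz : NotNonposInt z) {n : ℕ} (hn : 1 ≤ n) :
    poch z (n + 1) = (n : ℂ) ^ z * n.factorial / Complex.GammaSeq z n := by
  have hn0 : (n : ℂ) ≠ 0 := Nat.cast_ne_zero.2 (Nat.one_le_iff_ne_zero.1 hn)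
  have h2 : ((n:ℂ) ^ z * n.factorial) ≠ 0 := by
    apply mul_ne_zero
    · simp [Complex.cpow_eq_zero_iff, hn0]
    · exact_mod_cast Nat.factorial_ne_zero n
  rw [gammaSeq_eq]
  field_simp [poch_ne_zero hz (n+1)]
  exact (div_self h2).symm

noncomputable def gaussTerm (A B C : ℂ) (k : ℕ) : ℂ :=
  poch A k * poch B k / (poch C k * (Nat.factorial k))

lemma gaussTerm_zero (A B C : ℂ) : gaussTerm A B C 0 = 1 := by
  simp [gaussTerm, poch_zero]

lemma gaussTerm_succ (A B C : ℂ) (k : ℕ) :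
    gaussTerm A B C (k + 1) = gaussTerm A B C k * ((A + k) * (B + k) / ((C + k) * (k + 1))) := by
  simp only [gaussTerm, poch_succ, Nat.factorial_succ]
  rw [div_mul_div_comm]
  push_cast
  ring_nf

/-- If `A` is a nonpositive integer `-m`, the term vanishes for `k > m`. -/
lemma gaussTerm_eq_zero_left {A : ℂ} {m : ℕ} (hA : A = -(m:ℂ)) (B C : ℂ) {k : ℕ} (hk : m < k) :
    gaussTerm A B C k = 0 := by
  have : poch A k = 0 := by
    rw [poch_prod]
    exact prod_eq_zero (mem_range.2 hk) (by rw [hA]; ring)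
  simp [gaussTerm, this]

/-- Exact formula for `k * t_k` in terms of GammaSeq, for `k = n+1`, `n ≥ 1`. -/
lemma mul_gaussTerm_eq {A B C : ℂ} (hA : NotNonposInt A) (hB : NotNonposInt B)
    (hC : NotNonposInt C) {n : ℕ} (hn : 1 ≤ n) :
    ((n:ℂ) + 1) * gaussTerm A B C (n + 1) =
      (n : ℂ) ^ (A + B - C) * Complex.GammaSeq C n /
        (Complex.GammaSeq A n * Complex.GammaSeq B n) := by
  have hn0 : (n : ℂ) ≠ 0 := Nat.cast_ne_zero.2 (Nat.one_le_iff_ne_zero.1 hn)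
  have hfac : (n.factorial : ℂ) ≠ 0 := by exact_mod_cast Nat.factorial_ne_zero n
  have hGA := gammaSeq_ne_zero hA hn
  have hGB := gammaSeq_ne_zero hB hn
  have hGC := gammaSeq_ne_zero hC hn
  have hpow : (n:ℂ) ^ (A + B - C) * (n:ℂ) ^ C = (n:ℂ) ^ A * (n:ℂ) ^ B := by
    rw [← Complex.cpow_add _ _ hn0, ← Complex.cpow_add _ _ hn0]; ring_nf
  rw [gaussTerm, poch_eq_gammaSeq hA hn, poch_eq_gammaSeq hB hn, poch_eq_gammaSeq hC hn]
  have hfs : ((n+1).factorial : ℂ) = ((n:ℂ)+1) * n.factorial := by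
    rw [Nat.factorial_succ]; push_cast; ring
  rw [hfs]
  have hpA : (n:ℂ) ^ A ≠ 0 := by simp [Complex.cpow_eq_zero_iff, hn0]
  have hpB : (n:ℂ) ^ B ≠ 0 := by simp [Complex.cpow_eq_zero_iff, hn0]
  have hpC : (n:ℂ) ^ C ≠ 0 := by simp [Complex.cpow_eq_zero_iff, hn0]
  have hn1 : ((n:ℂ) + 1) ≠ 0 := by
    intro h
    have := congrArg Complex.re h
    simp at this
    have : (0:ℝ) ≤ (n:ℝ) := Nat.cast_nonneg n
    linarith
  field_simp
  linear_combination -hpow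

lemma tendsto_cpow_neg_re {w : ℂ} (hw : w.re < 0) :
    Tendsto (fun n : ℕ => (n : ℂ) ^ w) atTop (𝓝 0) := by
  rw [tendsto_zero_iff_norm_tendsto_zero]
  have h1 : ∀ᶠ n : ℕ in atTop, (n : ℝ) ^ w.re = ‖(n : ℂ) ^ w‖ := by
    filter_upwards [eventually_gt_atTop 0] with n hn
    rw [Complex.norm_natCast_cpow_of_pos hn]
  refine Tendsto.congr' h1 ?_
  have h2 : Tendsto (fun x : ℝ => x ^ w.re) atTop (𝓝 0) := by
    have := tendsto_rpow_neg_atTop (y := -w.re) (by linarith)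
    simpa using this
  exact h2.comp tendsto_natCast_atTop_atTop

lemma tendsto_mul_gaussTerm_degen {A B C : ℂ} {m : ℕ} (h : poch A (m+1) = 0) :
    Tendsto (fun k : ℕ => (k : ℂ) * gaussTerm A B C k) atTop (𝓝 0) := by
  refine Tendsto.congr' ?_ tendsto_const_nhds
  filter_upwards [eventually_gt_atTop m] with k hk
  have : poch A k = 0 := by
    obtain ⟨j, rfl⟩ : ∃ j, k = (m+1) + j := ⟨k - (m+1), by omega⟩
    rw [poch_add, h, zero_mul]
  simp [gaussTerm, this]

lemma poch_eq_zero_self {m : ℕ} : poch (-(m:ℂ)) (m+1) = 0 := by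
  rw [poch_prod]
  exact prod_eq_zero (i := m) (mem_range.2 (Nat.lt_succ_self m)) (by ring)

/-- `k * t_k → 0` when `Re (C - A - B) > 0`. -/
lemma tendsto_mul_gaussTerm (A B C : ℂ) (hC : NotNonposInt C) (hre : 0 < (C - A - B).re) :
    Tendsto (fun k : ℕ => (k : ℂ) * gaussTerm A B C k) atTop (𝓝 0) := by
  by_cases hA : NotNonposInt A
  swap
  · simp only [NotNonposInt, not_forall, not_ne_iff] at hA
    obtain ⟨m, hm⟩ := hA
    exact tendsto_mul_gaussTerm_degen (by rw [hm]; exact poch_eq_zero_self)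
  by_cases hB : NotNonposInt B
  swap
  · simp only [NotNonposInt, not_forall, not_ne_iff] at hB
    obtain ⟨m, hm⟩ := hB
    have : Tendsto (fun k : ℕ => (k : ℂ) * gaussTerm B A C k) atTop (𝓝 0) :=
      tendsto_mul_gaussTerm_degen (by rw [hm]; exact poch_eq_zero_self)
    refine Tendsto.congr (fun k => ?_) this
    simp only [gaussTerm]
    ring
  -- nondegenerate case
  have hlim : Tendsto (fun n : ℕ =>
      (n : ℂ) ^ (A + B - C) * Complex.GammaSeq C n /
        (Complex.GammaSeq A n * Complex.GammaSeq B n)) atTop (𝓝 0) := by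
    have h1 : Tendsto (fun n : ℕ => (n:ℂ) ^ (A+B-C)) atTop (𝓝 0) :=
      tendsto_cpow_neg_re (by simp [Complex.sub_re, Complex.add_re] at hre ⊢; linarith)
    have h2 : Tendsto (fun n : ℕ => Complex.GammaSeq C n /
        (Complex.GammaSeq A n * Complex.GammaSeq B n)) atTop
        (𝓝 (Complex.Gamma C / (Complex.Gamma A * Complex.Gamma B))) :=
      (Complex.GammaSeq_tendsto_Gamma C).div
        ((Complex.GammaSeq_tendsto_Gamma A).mul (Complex.GammaSeq_tendsto_Gamma B))
        (mul_ne_zero (Complex.Gamma_ne_zero hA) (Complex.Gamma_ne_zero hB))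
    have := h1.mul h2
    simpa [mul_div_assoc] using this
  have hcomp : Tendsto (fun k : ℕ =>
      ((k-1 : ℕ) : ℂ) ^ (A + B - C) * Complex.GammaSeq C (k-1) /
        (Complex.GammaSeq A (k-1) * Complex.GammaSeq B (k-1))) atTop (𝓝 0) :=
    hlim.comp (tendsto_sub_atTop_nat 1)
  refine Tendsto.congr' ?_ hcomp
  filter_upwards [eventually_ge_atTop 2] with k hk
  obtain ⟨n, rfl⟩ : ∃ n, k = n + 1 + 1 := ⟨k - 2, by omega⟩
  have hn : 1 ≤ n + 1 := by omega
  have := mul_gaussTerm_eq hA hB hC (n := n + 1) hn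
  simp only [Nat.add_sub_cancel]
  rw [← this]
  push_cast
  ring

lemma natCast_add_ne_zero {C : ℂ} (hC : NotNonposInt C) (k : ℕ) : C + (k:ℂ) ≠ 0 :=
  fun h => hC k (by linear_combination h)

/-- `u_k = t_k * C / (C + k)` relating parameters `C+1` and `C`. -/
lemma gaussTerm_succ_param {A B C : ℂ} (hC : NotNonposInt C) (k : ℕ) :
    gaussTerm A B (C + 1) k = gaussTerm A B C k * (C / (C + k)) := by
  have h1 : poch C (k+1) = C * poch (C + 1) k := by
    have := ascPochhammer_succ_left (S := ℂ) k
    simp only [poch, this, Polynomial.eval_mul, Polynomial.eval_X, Polynomial.eval_comp,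
      Polynomial.eval_add, Polynomial.eval_one]
  have h2 : poch C (k+1) = poch C k * (C + k) := poch_succ C k
  have hCk : C + (k:ℂ) ≠ 0 := natCast_add_ne_zero hC k
  have hC0 : C ≠ 0 := hC.ne_zero
  have hpC : poch C k ≠ 0 := poch_ne_zero hC k
  have h3 : poch (C+1) k = poch C k * (C + k) / C := by
    rw [← h2, h1]; field_simp
  rw [gaussTerm, gaussTerm, h3]
  field_simp
/-- Norm summability transfers from `C` to `C+1`. -/
lemma summable_gaussTerm_succ {A B C : ℂ} (hC : NotNonposInt C)
    (hs : Summable (fun k => ‖gaussTerm A B C k‖)) :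
    Summable (fun k => ‖gaussTerm A B (C+1) k‖) := by
  have : Summable (fun k => ‖gaussTerm A B C k‖ * ‖C‖) := hs.mul_right _
  refine Summable.of_norm_bounded_eventually_nat this ?_
  have hten : Tendsto (fun k : ℕ => ‖C + (k:ℂ)‖) atTop atTop := by
    refine tendsto_atTop_mono (fun k => ?_) (tendsto_atTop_add_const_left _ (-‖C‖)
      (tendsto_natCast_atTop_atTop (R := ℝ)))
    have h := norm_sub_le (C + (k:ℂ)) C
    simp only [add_sub_cancel_left] at h
    rw [Complex.norm_natCast] at h
    linarith
  filter_upwards [hten.eventually_ge_atTop 1] with k hk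
  rw [gaussTerm_succ_param hC, norm_norm, norm_mul, norm_div]
  rw [mul_comm (‖gaussTerm A B C k‖)]
  rw [mul_comm (‖gaussTerm A B C k‖) ‖C‖]
  apply mul_le_mul_of_nonneg_right _ (norm_nonneg _)
  rw [div_le_iff₀ (by linarith)]
  nlinarith [norm_nonneg C]

/-- The contiguous relation. -/
lemma gauss_step {A B C : ℂ} (hC : NotNonposInt C) (hre : 0 < (C - A - B).re)
    (hs : Summable (fun k => ‖gaussTerm A B C k‖)) :
    C * (C - A - B) * ∑' k, gaussTerm A B C k
      = (C - A) * (C - B) * ∑' k, gaussTerm A B (C+1) k := by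
  set t := gaussTerm A B C with ht
  set u := gaussTerm A B (C+1) with hu
  have hst : Summable t := hs.of_norm
  have hsu : Summable u := (summable_gaussTerm_succ hC hs).of_norm
  set w : ℕ → ℂ := fun k => C * k * t k with hw
  -- termwise identity
  have key : ∀ k : ℕ, C * (C - A - B) * t k - (C - A) * (C - B) * u k = w k - w (k+1) := by
    intro k
    have hCk : C + (k:ℂ) ≠ 0 := natCast_add_ne_zero hC k
    have hk1 : ((k:ℂ) + 1) ≠ 0 := by
      intro h
      have := congrArg Complex.re h
      simp at this
      have : (0:ℝ) ≤ (k:ℝ) := Nat.cast_nonneg k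
      linarith
    have h1 : u k = t k * (C / (C + k)) := gaussTerm_succ_param hC k
    have h2 : t (k+1) = t k * ((A + k) * (B + k) / ((C + k) * (k + 1))) := gaussTerm_succ A B C k
    simp only [hw]
    rw [h1, h2]
    push_cast
    field_simp
    ring
  -- telescoping
  have hsum1 : HasSum (fun k => C * (C - A - B) * t k - (C - A) * (C - B) * u k)
      (C * (C - A - B) * ∑' k, t k - (C - A) * (C - B) * ∑' k, u k) :=
    ((hst.hasSum.mul_left _).sub (hsu.hasSum.mul_left _))
  have hpartial : Tendsto (fun n => ∑ k ∈ range n,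
      (C * (C - A - B) * t k - (C - A) * (C - B) * u k)) atTop
      (𝓝 (C * (C - A - B) * ∑' k, t k - (C - A) * (C - B) * ∑' k, u k)) :=
    hsum1.tendsto_sum_nat
  have hpartial2 : Tendsto (fun n => ∑ k ∈ range n,
      (C * (C - A - B) * t k - (C - A) * (C - B) * u k)) atTop (𝓝 0) := by
    have heq : ∀ n, ∑ k ∈ range n, (C * (C - A - B) * t k - (C - A) * (C - B) * u k)
        = w 0 - w n := by
      intro n
      rw [← Finset.sum_range_sub' w n]
      exact Finset.sum_congr rfl fun k _ => key k
    rw [show (0:ℂ) = w 0 - 0 from by rw [hw]; simp]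
    refine Tendsto.congr (fun n => (heq n).symm) (Tendsto.sub tendsto_const_nhds ?_)
    have h := (tendsto_mul_gaussTerm A B C hC hre).const_mul C
    rw [mul_zero] at h
    refine h.congr fun k => ?_
    simp only [hw]; ring
  have := tendsto_nhds_unique hpartial hpartial2
  exact sub_eq_zero.1 this

lemma poch_succ_left (z : ℂ) (k : ℕ) : poch z (k+1) = z * poch (z + 1) k := by
  have := ascPochhammer_succ_left (S := ℂ) k
  simp only [poch, this, Polynomial.eval_mul, Polynomial.eval_X, Polynomial.eval_comp,
    Polynomial.eval_add, Polynomial.eval_one]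

lemma tendsto_norm_add_nat (C : ℂ) : Tendsto (fun k : ℕ => ‖C + (k:ℂ)‖) atTop atTop := by
  refine tendsto_atTop_mono (fun k => ?_) (tendsto_atTop_add_const_left _ (-‖C‖)
    (tendsto_natCast_atTop_atTop (R := ℝ)))
  have h := norm_sub_le (C + (k:ℂ)) C
  simp only [add_sub_cancel_left] at h
  rw [Complex.norm_natCast] at h
  linarith

lemma norm_le_norm_add_real {z : ℂ} (hz : 0 ≤ z.re) {d : ℝ} (hd : 0 ≤ d) :
    ‖z‖ ≤ ‖z + (d:ℂ)‖ := by
  rw [Complex.norm_def, Complex.norm_def,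
    Complex.normSq_apply, Complex.normSq_apply]
  apply Real.sqrt_le_sqrt
  simp only [Complex.add_re, Complex.add_im, Complex.ofReal_re, Complex.ofReal_im, add_zero]
  nlinarith

/-- Key monotone bound for the tail terms. -/
lemma gaussTerm_tail_bound {A B C : ℂ} (hC : NotNonposInt C) {N₀ N : ℕ}
    (hN₀ : 1 ≤ C.re + N₀) (hN : N₀ ≤ N) (k : ℕ) :
    ‖gaussTerm A B (C + N) (k+1)‖ ≤
      (‖C + (N₀:ℂ)‖ / ‖C + (N:ℂ)‖) * ‖gaussTerm A B (C + N₀) (k+1)‖ := by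
  have hnum0 : (0:ℝ) < ‖C + (N₀:ℂ)‖ := norm_pos_iff.2 (natCast_add_ne_zero hC N₀)
  have hnum1 : (0:ℝ) < ‖C + (N:ℂ)‖ := norm_pos_iff.2 (natCast_add_ne_zero hC N)
  -- compare the poch products
  have hprod : ‖poch (C + N₀ + 1) k‖ ≤ ‖poch (C + N + 1) k‖ := by
    rw [norm_poch, norm_poch]
    refine Finset.prod_le_prod (fun i _ => norm_nonneg _) (fun i _ => ?_)
    have h1 : (0:ℝ) ≤ (C + N₀ + 1 + i).re := by
      simp only [Complex.add_re, Complex.one_re, Complex.natCast_re]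
      linarith [Nat.cast_nonneg (α := ℝ) i]
    have h2 : (0:ℝ) ≤ ((N:ℝ) - (N₀:ℝ)) := by
      have : (N₀:ℝ) ≤ N := by exact_mod_cast hN
      linarith
    have := norm_le_norm_add_real h1 h2
    convert this using 2
    · rfl
    push_cast
    ring
  have hP : ‖poch (C + N) (k+1)‖ = ‖C + (N:ℂ)‖ * ‖poch (C + N + 1) k‖ := by
    rw [poch_succ_left, norm_mul]
  have hP0 : ‖poch (C + N₀) (k+1)‖ = ‖C + (N₀:ℂ)‖ * ‖poch (C + N₀ + 1) k‖ := by
    rw [poch_succ_left, norm_mul]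
  have hps : (0:ℝ) < ‖poch (C + N₀ + 1) k‖ := by
    refine norm_pos_iff.2 (poch_ne_zero ?_ k)
    intro m hm
    refine hC (m + N₀ + 1) ?_
    push_cast
    linear_combination hm
  have hps2 : (0:ℝ) < ‖poch (C + N + 1) k‖ := lt_of_lt_of_le hps hprod
  have hfac : (0:ℝ) < ((k+1).factorial : ℝ) := by exact_mod_cast Nat.factorial_pos _
  -- norms of gaussTerm
  have hgt : ∀ M : ℕ, ‖gaussTerm A B (C + M) (k+1)‖ =
      ‖poch A (k+1) * poch B (k+1)‖ / (‖poch (C + M) (k+1)‖ * ((k+1).factorial : ℝ)) := by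
    intro M
    rw [gaussTerm, norm_div, norm_mul (poch (C+M) (k+1))]
    norm_num
  rw [hgt, hgt, hP, hP0]
  have hRHS : (‖C + (N₀:ℂ)‖ / ‖C + (N:ℂ)‖) *
      (‖poch A (k+1) * poch B (k+1)‖ / (‖C + (N₀:ℂ)‖ * ‖poch (C + N₀ + 1) k‖ * ((k+1).factorial : ℝ)))
      = ‖poch A (k+1) * poch B (k+1)‖ / (‖C + (N:ℂ)‖ * ‖poch (C + N₀ + 1) k‖ * ((k+1).factorial : ℝ)) := by
    rw [div_mul_div_comm, mul_left_comm, mul_assoc]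
    rw [mul_div_mul_left _ _ hnum0.ne']
    ring_nf
  rw [hRHS]
  gcongr

section gauss
variable {A B C : ℂ}

lemma summable_gaussTerm_add (hC : NotNonposInt C)
    (hs : Summable (fun k => ‖gaussTerm A B C k‖)) (N : ℕ) :
    Summable (fun k => ‖gaussTerm A B (C + N) k‖) := by
  induction N with
  | zero => simpa using hs
  | succ N ih =>
    have := summable_gaussTerm_succ (hC.add_nat N) ih
    refine this.congr fun k => ?_
    push_cast
    ring_nf

lemma tendsto_gaussSum_one (hC : NotNonposInt C)
    (hs : Summable (fun k => ‖gaussTerm A B C k‖)) :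
    Tendsto (fun N : ℕ => ∑' k, gaussTerm A B (C + N) k) atTop (𝓝 1) := by
  obtain ⟨N₀, hN₀⟩ : ∃ N₀ : ℕ, 1 ≤ C.re + N₀ := by
    obtain ⟨n, hn⟩ := exists_nat_ge (1 - C.re)
    exact ⟨n, by linarith⟩
  set S₀ : ℝ := ∑' k, ‖gaussTerm A B (C + N₀) (k+1)‖ with hS₀
  have hsum₀ : Summable (fun k => ‖gaussTerm A B (C + N₀) (k+1)‖) :=
    (summable_nat_add_iff 1).2 (summable_gaussTerm_add hC hs N₀)
  have hS₀nn : 0 ≤ S₀ := tsum_nonneg fun k => norm_nonneg _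
  rw [tendsto_iff_norm_sub_tendsto_zero]
  have hbound : ∀ N, N₀ ≤ N → ‖(∑' k, gaussTerm A B (C + N) k) - 1‖ ≤
      (‖C + (N₀:ℂ)‖ * S₀) / ‖C + (N:ℂ)‖ := by
    intro N hN
    have hsumN : Summable (fun k => ‖gaussTerm A B (C + N) k‖) :=
      summable_gaussTerm_add hC hs N
    have hsumN' : Summable (fun k => ‖gaussTerm A B (C + N) (k+1)‖) :=
      (summable_nat_add_iff 1).2 hsumN
    have h1 : (∑' k, gaussTerm A B (C + N) k) - 1 = ∑' k, gaussTerm A B (C + N) (k+1) := by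
      rw [Summable.tsum_eq_zero_add hsumN.of_norm, gaussTerm_zero]
      ring
    rw [h1]
    calc ‖∑' k, gaussTerm A B (C + N) (k+1)‖ ≤ ∑' k, ‖gaussTerm A B (C + N) (k+1)‖ :=
          norm_tsum_le_tsum_norm hsumN'
      _ ≤ ∑' k, (‖C + (N₀:ℂ)‖ / ‖C + (N:ℂ)‖) * ‖gaussTerm A B (C + N₀) (k+1)‖ := by
          refine Summable.tsum_le_tsum (fun k => gaussTerm_tail_bound hC hN₀ hN k) hsumN' ?_
          exact hsum₀.mul_left _
      _ = (‖C + (N₀:ℂ)‖ * S₀) / ‖C + (N:ℂ)‖ := by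
          rw [tsum_mul_left, hS₀]
          ring
  have hten := tendsto_norm_add_nat C
  refine squeeze_zero' (g := fun N : ℕ => (‖C + (N₀:ℂ)‖ * S₀) / ‖C + (N:ℂ)‖) ?_ ?_
    (Tendsto.div_atTop (tendsto_const_nhds (x := ‖C + (N₀:ℂ)‖ * S₀)) hten)
  · exact Eventually.of_forall fun N => norm_nonneg _
  · filter_upwards [eventually_ge_atTop N₀] with N hN using hbound N hN

lemma gauss_iter (hC : NotNonposInt C) (hre : 0 < (C - A - B).re)
    (hs : Summable (fun k => ‖gaussTerm A B C k‖)) (N : ℕ) :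
    poch C N * poch (C - A - B) N * ∑' k, gaussTerm A B C k
      = poch (C - A) N * poch (C - B) N * ∑' k, gaussTerm A B (C + N) k := by
  induction N with
  | zero => simp [poch_zero]
  | succ N ih =>
    have hCN : NotNonposInt (C + N) := hC.add_nat N
    have hreN : 0 < ((C + N) - A - B).re := by
      simp only [Complex.sub_re, Complex.add_re, Complex.natCast_re] at hre ⊢
      have : (0:ℝ) ≤ N := Nat.cast_nonneg N
      linarith
    have hstep := gauss_step hCN hreN (summable_gaussTerm_add hC hs N)
    have hcast : ∀ k, gaussTerm A B (C + N + 1) k = gaussTerm A B (C + (N+1 : ℕ)) k := by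
      intro k; push_cast; ring_nf
    rw [poch_succ, poch_succ, poch_succ, poch_succ]
    have h2 : (C + (N:ℂ)) - A - B = (C - A - B) + N := by ring
    have h3 : (C + (N:ℂ)) - A = (C - A) + N := by ring
    have h4 : (C + (N:ℂ)) - B = (C - B) + N := by ring
    rw [h2, h3, h4] at hstep
    have := congrArg (fun z => poch (C-A) N * poch (C-B) N * z) hstep
    calc poch C N * (C + N) * (poch (C-A-B) N * ((C-A-B) + N)) * ∑' k, gaussTerm A B C k
        = (C + N) * ((C-A-B) + N) * (poch C N * poch (C-A-B) N * ∑' k, gaussTerm A B C k) := by ring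
      _ = (C + N) * ((C-A-B) + N) * (poch (C-A) N * poch (C-B) N * ∑' k, gaussTerm A B (C + N) k) := by rw [ih]
      _ = poch (C-A) N * poch (C-B) N * ((C + N) * ((C-A-B) + N) * ∑' k, gaussTerm A B (C + N) k) := by ring
      _ = poch (C-A) N * poch (C-B) N * (((C-A) + N) * ((C-B) + N) * ∑' k, gaussTerm A B (C + N + 1) k) := by rw [this]
      _ = poch (C-A) N * ((C-A) + N) * (poch (C-B) N * ((C-B) + N)) * ∑' k, gaussTerm A B (C + (N+1:ℕ)) k := by
          rw [tsum_congr hcast]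
          ring

lemma pochRatio_eq (hC : NotNonposInt C) (hCA : NotNonposInt (C - A))
    (hCB : NotNonposInt (C - B)) (hCAB : NotNonposInt (C - A - B))
    {n : ℕ} (hn : 1 ≤ n) :
    poch (C - A) (n+1) * poch (C - B) (n+1) / (poch C (n+1) * poch (C - A - B) (n+1))
      = Complex.GammaSeq C n * Complex.GammaSeq (C - A - B) n /
          (Complex.GammaSeq (C - A) n * Complex.GammaSeq (C - B) n) := by
  have hn0 : (n : ℂ) ≠ 0 := Nat.cast_ne_zero.2 (Nat.one_le_iff_ne_zero.1 hn)
  have hfac : (n.factorial : ℂ) ≠ 0 := by exact_mod_cast Nat.factorial_ne_zero n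
  have hG1 := gammaSeq_ne_zero hCA hn
  have hG2 := gammaSeq_ne_zero hCB hn
  have hG3 := gammaSeq_ne_zero hC hn
  have hG4 := gammaSeq_ne_zero hCAB hn
  have hpow : (n:ℂ) ^ (C - A) * (n:ℂ) ^ (C - B) = (n:ℂ) ^ C * (n:ℂ) ^ (C - A - B) := by
    rw [← Complex.cpow_add _ _ hn0, ← Complex.cpow_add _ _ hn0]
    congr 1
    ring
  rw [poch_eq_gammaSeq hCA hn, poch_eq_gammaSeq hCB hn, poch_eq_gammaSeq hC hn,
    poch_eq_gammaSeq hCAB hn]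
  rw [div_mul_div_comm, div_mul_div_comm, div_div_div_eq]
  rw [show (n:ℂ) ^ (C - A) * ↑n.factorial * ((n:ℂ) ^ (C - B) * ↑n.factorial)
      = (n:ℂ) ^ C * (n:ℂ) ^ (C - A - B) * (↑n.factorial * ↑n.factorial) from by
    rw [← hpow]; ring]
  rw [show (n:ℂ) ^ C * ↑n.factorial * ((n:ℂ) ^ (C-A-B) * ↑n.factorial)
      = (n:ℂ) ^ C * (n:ℂ) ^ (C - A - B) * (↑n.factorial * ↑n.factorial) from by ring]
  set X := (n:ℂ) ^ C * (n:ℂ) ^ (C - A - B) * (↑n.factorial * ↑n.factorial) with hX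
  have hXne : X ≠ 0 := by
    rw [hX]
    apply mul_ne_zero (mul_ne_zero ?_ ?_) (mul_ne_zero hfac hfac) <;>
      simp [Complex.cpow_eq_zero_iff, hn0]
  rw [mul_comm (Complex.GammaSeq (C-A) n * Complex.GammaSeq (C-B) n) X,
    mul_div_mul_left _ _ hXne]

/-- **Gauss's summation theorem** for ₂F₁ at 1. -/
theorem gauss_sum (hC : NotNonposInt C) (hre : 0 < (C - A - B).re)
    (hs : Summable (fun k => ‖gaussTerm A B C k‖)) :
    ∑' k, gaussTerm A B C k
      = Complex.Gamma C * Complex.Gamma (C - A - B) /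
          (Complex.Gamma (C - A) * Complex.Gamma (C - B)) := by
  have hCAB : NotNonposInt (C - A - B) := NotNonposInt.of_re_pos hre
  by_cases hCA : NotNonposInt (C - A)
  · by_cases hCB : NotNonposInt (C - B)
    · -- nondegenerate
      have hGne : Complex.Gamma (C - A) * Complex.Gamma (C - B) ≠ 0 :=
        mul_ne_zero (Complex.Gamma_ne_zero hCA) (Complex.Gamma_ne_zero hCB)
      have hQ : Tendsto (fun n : ℕ => Complex.GammaSeq C n * Complex.GammaSeq (C-A-B) n /
          (Complex.GammaSeq (C-A) n * Complex.GammaSeq (C-B) n)) atTop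
          (𝓝 (Complex.Gamma C * Complex.Gamma (C - A - B) /
            (Complex.Gamma (C - A) * Complex.Gamma (C - B)))) :=
        ((Complex.GammaSeq_tendsto_Gamma C).mul (Complex.GammaSeq_tendsto_Gamma _)).div
          ((Complex.GammaSeq_tendsto_Gamma _).mul (Complex.GammaSeq_tendsto_Gamma _)) hGne
      have hR : Tendsto (fun N : ℕ => poch (C-A) N * poch (C-B) N /
          (poch C N * poch (C-A-B) N)) atTop
          (𝓝 (Complex.Gamma C * Complex.Gamma (C - A - B) /
            (Complex.Gamma (C - A) * Complex.Gamma (C - B)))) := by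
        have hcomp := hQ.comp (tendsto_sub_atTop_nat 1)
        refine Tendsto.congr' ?_ hcomp
        filter_upwards [eventually_ge_atTop 2] with N hN
        obtain ⟨n, rfl⟩ : ∃ n, N = n + 1 + 1 := ⟨N - 2, by omega⟩
        have hn : 1 ≤ n + 1 := by omega
        have := pochRatio_eq hC hCA hCB hCAB hn
        simp only [Function.comp, Nat.add_sub_cancel]
        exact this.symm
      have hkey : ∀ N : ℕ, (∑' k, gaussTerm A B C k)
          = poch (C-A) N * poch (C-B) N / (poch C N * poch (C-A-B) N) *
              ∑' k, gaussTerm A B (C + N) k := by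
        intro N
        have hne : poch C N * poch (C-A-B) N ≠ 0 :=
          mul_ne_zero (poch_ne_zero hC N) (poch_ne_zero hCAB N)
        have hiter := gauss_iter hC hre hs N
        rw [div_mul_eq_mul_div, eq_div_iff hne]
        linear_combination hiter
      have hS1 := tendsto_gaussSum_one hC hs (A := A) (B := B)
      have hfinal : Tendsto (fun N : ℕ => poch (C-A) N * poch (C-B) N /
          (poch C N * poch (C-A-B) N) * ∑' k, gaussTerm A B (C + N) k) atTop
          (𝓝 (Complex.Gamma C * Complex.Gamma (C - A - B) /
            (Complex.Gamma (C - A) * Complex.Gamma (C - B)))) := by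
        have := hR.mul hS1
        simpa using this
      exact tendsto_nhds_unique (Tendsto.congr (fun N => (hkey N).symm) hfinal)
        tendsto_const_nhds |>.symm ▸ rfl
    · -- C - B = -m
      simp only [NotNonposInt, not_forall, not_ne_iff] at hCB
      obtain ⟨m, hm⟩ := hCB
      have hiter := gauss_iter hC hre hs (m+1)
      have hz : poch (C - B) (m+1) = 0 := by rw [hm]; exact poch_eq_zero_self
      rw [hz, mul_zero, zero_mul] at hiter
      have hne : poch C (m+1) * poch (C-A-B) (m+1) ≠ 0 :=
        mul_ne_zero (poch_ne_zero hC _) (poch_ne_zero hCAB _)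
      have hS0 : (∑' k, gaussTerm A B C k) = 0 := by
        rcases mul_eq_zero.1 hiter with h | h
        · exact absurd h hne
        · exact h
      rw [hS0, hm, Complex.Gamma_neg_nat_eq_zero, mul_zero, div_zero]
  · -- C - A = -m
    simp only [NotNonposInt, not_forall, not_ne_iff] at hCA
    obtain ⟨m, hm⟩ := hCA
    have hiter := gauss_iter hC hre hs (m+1)
    have hz : poch (C - A) (m+1) = 0 := by rw [hm]; exact poch_eq_zero_self
    rw [hz, zero_mul, zero_mul] at hiter
    have hne : poch C (m+1) * poch (C-A-B) (m+1) ≠ 0 :=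
      mul_ne_zero (poch_ne_zero hC _) (poch_ne_zero hCAB _)
    have hS0 : (∑' k, gaussTerm A B C k) = 0 := by
      rcases mul_eq_zero.1 hiter with h | h
      · exact absurd h hne
      · exact h
    rw [hS0, hm, Complex.Gamma_neg_nat_eq_zero, zero_mul, div_zero]
end gauss


theorem F1_at_y_eq_one (a b₁ b₂ c : ℂ) (hc : NotNonposInt c) (hcb : NotNonposInt (c - b₂))
    (hre : 0 < (c - a - b₂).re) (x : ℝ) (hx : |x| < 1)
    (hsum : Summable (fun p : ℕ × ℕ => ‖F1term a b₁ b₂ c (x : ℂ) 1 p‖)) :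
    F1 a b₁ b₂ c (x : ℂ) 1 =
      Complex.Gamma c * Complex.Gamma (c - a - b₂) /
          (Complex.Gamma (c - a) * Complex.Gamma (c - b₂)) *
        twoF1 a b₁ (c - b₂) (x : ℂ) := by
  show (∑' p : ℕ × ℕ, F1term a b₁ b₂ c (x:ℂ) 1 p) = _
  rw [twoF1]
  set X : ℂ := (x : ℂ) with hX
  set K : ℂ := Complex.Gamma c * Complex.Gamma (c - a - b₂) /
      (Complex.Gamma (c - a) * Complex.Gamma (c - b₂)) with hK
  set d : ℕ → ℂ := fun j => poch a j * poch b₁ j / (poch c j * (j.factorial : ℂ)) * X ^ j with hd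
  set e : ℕ → ℂ := fun j => poch a j * poch b₁ j / (poch (c - b₂) j * (j.factorial : ℂ)) * X ^ j
    with he
  -- factorization of the summand
  have hfac : ∀ j k : ℕ, F1term a b₁ b₂ c X 1 (j, k) = d j * gaussTerm (a + j) b₂ (c + j) k := by
    intro j k
    simp only [F1term, gaussTerm, hd, one_pow]
    rw [poch_add a j k, poch_add c j k]
    push_cast
    simp only [div_eq_mul_inv, mul_inv]
    ring
  have hsummable : Summable (F1term a b₁ b₂ c X 1) := hsum.of_norm
  rw [Summable.tsum_prod hsummable]
  -- inner sums
  have hrow : ∀ j : ℕ, (∑' k, F1term a b₁ b₂ c X 1 (j, k)) = K * e j := by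
    intro j
    have hpc : poch c j ≠ 0 := poch_ne_zero hc j
    have hpcb : poch (c - b₂) j ≠ 0 := poch_ne_zero hcb j
    have hjfac : ((j.factorial : ℂ)) ≠ 0 := by exact_mod_cast Nat.factorial_ne_zero j
    have hinner : (∑' k, F1term a b₁ b₂ c X 1 (j, k)) = d j * ∑' k, gaussTerm (a+j) b₂ (c+j) k := by
      rw [tsum_congr (fun k => hfac j k), tsum_mul_left]
    rw [hinner]
    by_cases hdj : d j = 0
    · -- row vanishes
      have hej : e j = 0 := by
        rcases mul_eq_zero.1 hdj with h | h
        · rcases div_eq_zero_iff.1 h with h' | h'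
          · simp only [he, h', zero_div, zero_mul]
          · exact absurd h' (mul_ne_zero hpc hjfac)
        · simp only [he, h, mul_zero]
      rw [hdj, hej, zero_mul, mul_zero]
    · -- use Gauss summation
      have hsummable_row : Summable (fun k => ‖gaussTerm (a+j) b₂ (c+j) k‖) := by
        have h1 : Summable (fun k => ‖F1term a b₁ b₂ c X 1 (j, k)‖) := hsum.prod_factor j
        have h2 : Summable (fun k => ‖d j‖ * ‖gaussTerm (a+j) b₂ (c+j) k‖) := by
          refine h1.congr fun k => ?_
          rw [hfac j k, norm_mul]
        have hdj' : ‖d j‖ ≠ 0 := norm_ne_zero_iff.2 hdj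
        rcases h2.mul_left (‖d j‖⁻¹) with h3
        refine h3.congr fun k => ?_
        rw [← mul_assoc, inv_mul_cancel₀ hdj', one_mul]
      have hCj : NotNonposInt (c + j) := hc.add_nat j
      have hrej : 0 < ((c + (j:ℂ)) - (a + (j:ℂ)) - b₂).re := by
        have : (c + (j:ℂ)) - (a + (j:ℂ)) - b₂ = c - a - b₂ := by ring
        rw [this]; exact hre
      have hgauss := gauss_sum hCj hrej hsummable_row
      have hsimp1 : (c + (j:ℂ)) - (a + (j:ℂ)) - b₂ = c - a - b₂ := by ring
      have hsimp2 : (c + (j:ℂ)) - (a + (j:ℂ)) = c - a := by ring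
      have hsimp3 : (c + (j:ℂ)) - b₂ = (c - b₂) + (j:ℂ) := by ring
      rw [hsimp1, hsimp2, hsimp3] at hgauss
      rw [hgauss, Gamma_add_nat hc j, Gamma_add_nat hcb j]
      -- now a pure algebraic identity with cancellation of `poch c j`
      simp only [hd, he, hK]
      linear_combination (poch a j * poch b₁ j * X ^ j * Complex.Gamma c * Complex.Gamma (c - a - b₂)
        * ((j.factorial : ℂ))⁻¹ * (Complex.Gamma (c - a))⁻¹ * (poch (c - b₂) j)⁻¹
        * (Complex.Gamma (c - b₂))⁻¹) * (mul_inv_cancel₀ hpc)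
  rw [tsum_congr hrow, tsum_mul_left]
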